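/- arXiv:1804.03062 — 7 statements merged into one kernel-verified Lean document; each statement's English description precedes it below -/
import Mathlib

section
/- Under the logistic models for Y given (X,W) and W given X, the derivative γ(x) := d/dx g_0(x) of the log odds of W given Y=0, X=x satisfies γ(x) = γx − βx·Δy(x) − βxw·P(Y=1|W=1,X=x), where Δy(x) = P(Y=1|W=1,X=x) − P(Y=1|W=0,X=x). -/
noncomputable def expit (t : ℝ) : ℝ := Real.exp t / (1 + Real.exp t)

/-- `P(Y=1 | X=x, W=w)` under the logistic model. -/
noncomputable def pY (β0 βx βw βxw x w : ℝ) : ℝ := expit (β0 + βx * x + βw * w + βxw * x * w)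

/-- `P(W=1 | X=x)` under the logistic model. -/
noncomputable def pW (γ0 γx x : ℝ) : ℝ := expit (γ0 + γx * x)

/-- joint conditional probability `P(Y=y, W=w | X=x)` induced by the two logistic models. -/
noncomputable def jnt (β0 βx βw βxw γ0 γx x : ℝ) (y w : Bool) : ℝ :=
  (if y then pY β0 βx βw βxw x (if w then 1 else 0)
   else 1 - pY β0 βx βw βxw x (if w then 1 else 0)) *
  (if w then pW γ0 γx x else 1 - pW γ0 γx x)

/-- `P(W=w | Y=y, X=x)` obtained via Bayes' theorem. -/
noncomputable def pWgYX (β0 βx βw βxw γ0 γx x : ℝ) (y w : Bool) : ℝ :=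
  jnt β0 βx βw βxw γ0 γx x y w /
    (jnt β0 βx βw βxw γ0 γx x y true + jnt β0 βx βw βxw γ0 γx x y false)

/-- marginal (over `W`) probability `P(Y=y | X=x)`. -/
noncomputable def pYgX (β0 βx βw βxw γ0 γx x : ℝ) (y : Bool) : ℝ :=
  jnt β0 βx βw βxw γ0 γx x y true + jnt β0 βx βw βxw γ0 γx x y false

/-- `g_y(x)`, the conditional log odds of `W` given `Y=y, X=x`. -/
noncomputable def g (β0 βx βw βxw γ0 γx : ℝ) (y : Bool) (x : ℝ) : ℝ :=
  Real.log (pWgYX β0 βx βw βxw γ0 γx x y true / pWgYX β0 βx βw βxw γ0 γx x y false)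

/-- the marginal log odds of `Y` given `X=x`. -/
noncomputable def margLogit (β0 βx βw βxw γ0 γx : ℝ) (x : ℝ) : ℝ :=
  Real.log (pYgX β0 βx βw βxw γ0 γx x true / pYgX β0 βx βw βxw γ0 γx x false)

/-- `β(x)`, the marginal log-odds effect of `X` on `Y`. -/
noncomputable def betaMarg (β0 βx βw βxw γ0 γx : ℝ) (x : ℝ) : ℝ :=
  deriv (margLogit β0 βx βw βxw γ0 γx) x

lemma g_false_eq (β0 βx βw βxw γ0 γx : ℝ) :
    g β0 βx βw βxw γ0 γx false = fun t =>
      (γ0 + γx * t) + (Real.log (1 + Real.exp (β0 + βx * t + βw * 0 + βxw * t * 0))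
        - Real.log (1 + Real.exp (β0 + βx * t + βw * 1 + βxw * t * 1))) := by
  funext t
  have e0 : (0:ℝ) < 1 + Real.exp (β0 + βx * t + βw * 0 + βxw * t * 0) := by positivity
  have e1 : (0:ℝ) < 1 + Real.exp (β0 + βx * t + βw * 1 + βxw * t * 1) := by positivity
  have ec : (0:ℝ) < 1 + Real.exp (γ0 + γx * t) := by positivity
  have h1 : pWgYX β0 βx βw βxw γ0 γx t false true / pWgYX β0 βx βw βxw γ0 γx t false false
      = Real.exp (γ0 + γx * t) * (1 + Real.exp (β0 + βx * t + βw * 0 + βxw * t * 0))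
          / (1 + Real.exp (β0 + βx * t + βw * 1 + βxw * t * 1)) := by
    unfold pWgYX jnt pY pW expit
    simp only [if_true, if_false, Bool.false_eq_true]
    have hn1 : 1 - Real.exp (β0 + βx * t + βw * 1 + βxw * t * 1) /
        (1 + Real.exp (β0 + βx * t + βw * 1 + βxw * t * 1))
        = 1 / (1 + Real.exp (β0 + βx * t + βw * 1 + βxw * t * 1)) := by
      field_simp
      ring
    have hn0 : 1 - Real.exp (β0 + βx * t + βw * 0 + βxw * t * 0) /
        (1 + Real.exp (β0 + βx * t + βw * 0 + βxw * t * 0))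
        = 1 / (1 + Real.exp (β0 + βx * t + βw * 0 + βxw * t * 0)) := by
      field_simp
      ring
    have hnc : 1 - Real.exp (γ0 + γx * t) / (1 + Real.exp (γ0 + γx * t))
        = 1 / (1 + Real.exp (γ0 + γx * t)) := by
      field_simp
      ring
    simp only [hn1, hn0, hnc]
    rw [div_div_div_cancel_right₀ (by positivity)]
    field_simp
  unfold g
  rw [h1, Real.log_div (by positivity) (ne_of_gt e1), Real.log_mul (Real.exp_ne_zero _) (ne_of_gt e0), Real.log_exp]
  ring

/-- `γ(x) = d/dx g_0(x) = γx − βx·Δy(x) − βxw·P(Y=1|W=1,X=x)`,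
where `Δy(x) = P(Y=1|W=1,X=x) − P(Y=1|W=0,X=x)`. -/
theorem deriv_g_zero (β0 βx βw βxw γ0 γx : ℝ) (x : ℝ) :
    deriv (g β0 βx βw βxw γ0 γx false) x
      = γx - βx * (pY β0 βx βw βxw x 1 - pY β0 βx βw βxw x 0)
          - βxw * pY β0 βx βw βxw x 1 := by
  have e0 : (0:ℝ) < 1 + Real.exp (β0 + βx * x + βw * 0 + βxw * x * 0) := by positivity
  have e1 : (0:ℝ) < 1 + Real.exp (β0 + βx * x + βw * 1 + βxw * x * 1) := by positivity
  have ha0 : HasDerivAt (fun t : ℝ => β0 + βx * t + βw * 0 + βxw * t * 0) βx x := by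
    have h := (((hasDerivAt_const x β0).add ((hasDerivAt_id x).const_mul βx)).add
        (hasDerivAt_const x (βw * 0))).add (((hasDerivAt_id x).const_mul βxw).mul_const 0)
    exact h.congr_deriv (by ring)
  have ha1 : HasDerivAt (fun t : ℝ => β0 + βx * t + βw * 1 + βxw * t * 1) (βx + βxw) x := by
    have h := (((hasDerivAt_const x β0).add ((hasDerivAt_id x).const_mul βx)).add
        (hasDerivAt_const x (βw * 1))).add (((hasDerivAt_id x).const_mul βxw).mul_const 1)
    exact h.congr_deriv (by ring)
  have hl0 : HasDerivAt (fun t : ℝ => Real.log (1 + Real.exp (β0 + βx * t + βw * 0 + βxw * t * 0)))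
      (Real.exp (β0 + βx * x + βw * 0 + βxw * x * 0) * βx /
        (1 + Real.exp (β0 + βx * x + βw * 0 + βxw * x * 0))) x :=
    (((ha0.exp).const_add 1).log (ne_of_gt e0))
  have hl1 : HasDerivAt (fun t : ℝ => Real.log (1 + Real.exp (β0 + βx * t + βw * 1 + βxw * t * 1)))
      (Real.exp (β0 + βx * x + βw * 1 + βxw * x * 1) * (βx + βxw) /
        (1 + Real.exp (β0 + βx * x + βw * 1 + βxw * x * 1))) x :=
    (((ha1.exp).const_add 1).log (ne_of_gt e1))
  have hc : HasDerivAt (fun t : ℝ => γ0 + γx * t) γx x := by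
    have h := (hasDerivAt_const x γ0).add ((hasDerivAt_id x).const_mul γx)
    exact h.congr_deriv (by ring)
  have hG : HasDerivAt (g β0 βx βw βxw γ0 γx false)
      (γx + (Real.exp (β0 + βx * x + βw * 0 + βxw * x * 0) * βx /
        (1 + Real.exp (β0 + βx * x + βw * 0 + βxw * x * 0))
        - Real.exp (β0 + βx * x + βw * 1 + βxw * x * 1) * (βx + βxw) /
        (1 + Real.exp (β0 + βx * x + βw * 1 + βxw * x * 1)))) x := by
    rw [g_false_eq]
    exact hc.add (hl0.sub hl1)
  rw [hG.deriv]
  unfold pY expit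
  have h01 : β0 + βx * x + βw * 1 + βxw * x * 1 = β0 + βx * x + βw + βxw * x := by ring
  have h00 : β0 + βx * x + βw * 0 + βxw * x * 0 = β0 + βx * x := by ring
  rw [h01, h00] at *
  field_simp
  ring
end

section
/- Under the logistic models for Y given (X,W) and W given X, the marginal log-odds effect β(x) := d/dx log[P(Y=1|X=x)/P(Y=0|X=x)] satisfies the exact decomposition β(x) = βx·{1 − Δy(x)Δw(x)} + βxw·{P(W=1|Y=1,X=x) − Δw(x)·P(Y=1|W=1,X=x)} + γx·Δw(x), where Δy(x) = P(Y=1|W=1,X=x) − P(Y=1|W=0,X=x) and Δw(x) = P(W=1|Y=1,X=x) − P(W=1|Y=0,X=x). -/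
section Aux

variable (β0 βx βw βxw γ0 γx : ℝ)

set_option maxHeartbeats 1600000 in
lemma pYgX_true_eq (t : ℝ) :
    pYgX β0 βx βw βxw γ0 γx t true =
      (Real.exp (β0 + βx * t + βw + βxw * t) * Real.exp (γ0 + γx * t) *
          (1 + Real.exp (β0 + βx * t)) +
        Real.exp (β0 + βx * t) * (1 + Real.exp (β0 + βx * t + βw + βxw * t))) /
      ((1 + Real.exp (β0 + βx * t + βw + βxw * t)) * (1 + Real.exp (β0 + βx * t)) *
        (1 + Real.exp (γ0 + γx * t))) := by
  set A := Real.exp (β0 + βx * t + βw + βxw * t) with hA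
  set B := Real.exp (β0 + βx * t) with hB
  set C := Real.exp (γ0 + γx * t) with hC
  have hApos : 0 < A := Real.exp_pos _
  have hBpos : 0 < B := Real.exp_pos _
  have hCpos : 0 < C := Real.exp_pos _
  have hpyA : pY β0 βx βw βxw t 1 = A / (1 + A) := by
    simp only [pY, expit, hA]; ring_nf
  have hpyB : pY β0 βx βw βxw t 0 = B / (1 + B) := by
    simp only [pY, expit, hB]; ring_nf
  have hpw : pW γ0 γx t = C / (1 + C) := by simp only [pW, expit, hC]
  simp only [pYgX, jnt, Bool.false_eq_true, if_false, if_true, hpyA, hpyB, hpw]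
  have e1 : (1:ℝ) + A ≠ 0 := by positivity
  have e2 : (1:ℝ) + B ≠ 0 := by positivity
  have e3 : (1:ℝ) + C ≠ 0 := by positivity
  field_simp
  ring

set_option maxHeartbeats 1600000 in
lemma pYgX_false_eq (t : ℝ) :
    pYgX β0 βx βw βxw γ0 γx t false =
      (Real.exp (γ0 + γx * t) * (1 + Real.exp (β0 + βx * t)) +
        (1 + Real.exp (β0 + βx * t + βw + βxw * t))) /
      ((1 + Real.exp (β0 + βx * t + βw + βxw * t)) * (1 + Real.exp (β0 + βx * t)) *
        (1 + Real.exp (γ0 + γx * t))) := by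
  set A := Real.exp (β0 + βx * t + βw + βxw * t) with hA
  set B := Real.exp (β0 + βx * t) with hB
  set C := Real.exp (γ0 + γx * t) with hC
  have hApos : 0 < A := Real.exp_pos _
  have hBpos : 0 < B := Real.exp_pos _
  have hCpos : 0 < C := Real.exp_pos _
  have hpyA : pY β0 βx βw βxw t 1 = A / (1 + A) := by
    simp only [pY, expit, hA]; ring_nf
  have hpyB : pY β0 βx βw βxw t 0 = B / (1 + B) := by
    simp only [pY, expit, hB]; ring_nf
  have hpw : pW γ0 γx t = C / (1 + C) := by simp only [pW, expit, hC]
  simp only [pYgX, jnt, Bool.false_eq_true, if_false, if_true, hpyA, hpyB, hpw]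
  have e1 : (1:ℝ) + A ≠ 0 := by positivity
  have e2 : (1:ℝ) + B ≠ 0 := by positivity
  have e3 : (1:ℝ) + C ≠ 0 := by positivity
  field_simp
  ring

set_option maxHeartbeats 1600000 in
/-- closed forms -/
lemma margLogit_eq (t : ℝ) :
    margLogit β0 βx βw βxw γ0 γx t =
      Real.log (Real.exp (β0 + βx * t + βw + βxw * t) * Real.exp (γ0 + γx * t) *
          (1 + Real.exp (β0 + βx * t)) +
        Real.exp (β0 + βx * t) * (1 + Real.exp (β0 + βx * t + βw + βxw * t))) -
      Real.log (Real.exp (γ0 + γx * t) * (1 + Real.exp (β0 + βx * t)) +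
        (1 + Real.exp (β0 + βx * t + βw + βxw * t))) := by
  set A := Real.exp (β0 + βx * t + βw + βxw * t) with hA
  set B := Real.exp (β0 + βx * t) with hB
  set C := Real.exp (γ0 + γx * t) with hC
  have hApos : 0 < A := Real.exp_pos _
  have hBpos : 0 < B := Real.exp_pos _
  have hCpos : 0 < C := Real.exp_pos _
  have h1A : (0:ℝ) < 1 + A := by linarith
  have h1B : (0:ℝ) < 1 + B := by linarith
  have h1C : (0:ℝ) < 1 + C := by linarith
  have hpyA : pY β0 βx βw βxw t 1 = A / (1 + A) := by
    simp only [pY, expit, hA]; ring_nf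
  have hpyB : pY β0 βx βw βxw t 0 = B / (1 + B) := by
    simp only [pY, expit, hB]; ring_nf
  have hpw : pW γ0 γx t = C / (1 + C) := by simp only [pW, expit, hC]
  have hN : pYgX β0 βx βw βxw γ0 γx t true =
      (A * C * (1 + B) + B * (1 + A)) / ((1 + A) * (1 + B) * (1 + C)) := by
    simp only [pYgX, jnt, Bool.false_eq_true, if_false, if_true, hpyA, hpyB, hpw]
    field_simp
    ring
  have hD : pYgX β0 βx βw βxw γ0 γx t false =
      (C * (1 + B) + (1 + A)) / ((1 + A) * (1 + B) * (1 + C)) := by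
    simp only [pYgX, jnt, Bool.false_eq_true, if_false, if_true, hpyA, hpyB, hpw]
    field_simp
    ring
  have hNpos : 0 < A * C * (1 + B) + B * (1 + A) := by positivity
  have hDpos : 0 < C * (1 + B) + (1 + A) := by positivity
  have hprod : (0:ℝ) < (1 + A) * (1 + B) * (1 + C) := by positivity
  rw [margLogit, hN, hD, Real.log_div (by positivity) (by positivity),
    Real.log_div hNpos.ne' hprod.ne', Real.log_div hDpos.ne' hprod.ne']
  ring

end Aux

set_option maxHeartbeats 4000000 in
/-- The exact decomposition of the marginal log-odds effect (Equation (4) of the paper):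
`β(x) = βx{1 − Δy(x)Δw(x)} + βxw{P(W=1|Y=1,X=x) − Δw(x)P(Y=1|W=1,X=x)} + γx·Δw(x)`. -/
theorem marginal_effect_decomposition (β0 βx βw βxw γ0 γx : ℝ) (x : ℝ) :
    betaMarg β0 βx βw βxw γ0 γx x
      = βx * (1 - (pY β0 βx βw βxw x 1 - pY β0 βx βw βxw x 0) *
                  (pWgYX β0 βx βw βxw γ0 γx x true true - pWgYX β0 βx βw βxw γ0 γx x false true))
        + βxw * (pWgYX β0 βx βw βxw γ0 γx x true true -
                  (pWgYX β0 βx βw βxw γ0 γx x true true - pWgYX β0 βx βw βxw γ0 γx x false true) *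
                    pY β0 βx βw βxw x 1)
        + γx * (pWgYX β0 βx βw βxw γ0 γx x true true - pWgYX β0 βx βw βxw γ0 γx x false true) := by
  have hfun : margLogit β0 βx βw βxw γ0 γx = fun t =>
      Real.log (Real.exp (β0 + βx * t + βw + βxw * t) * Real.exp (γ0 + γx * t) *
          (1 + Real.exp (β0 + βx * t)) +
        Real.exp (β0 + βx * t) * (1 + Real.exp (β0 + βx * t + βw + βxw * t))) -
      Real.log (Real.exp (γ0 + γx * t) * (1 + Real.exp (β0 + βx * t)) +
        (1 + Real.exp (β0 + βx * t + βw + βxw * t))) :=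
    funext (margLogit_eq β0 βx βw βxw γ0 γx)
  set A := Real.exp (β0 + βx * x + βw + βxw * x) with hA
  set B := Real.exp (β0 + βx * x) with hB
  set C := Real.exp (γ0 + γx * x) with hC
  have hApos : 0 < A := Real.exp_pos _
  have hBpos : 0 < B := Real.exp_pos _
  have hCpos : 0 < C := Real.exp_pos _
  have h1A : (0:ℝ) < 1 + A := by linarith
  have h1B : (0:ℝ) < 1 + B := by linarith
  have h1C : (0:ℝ) < 1 + C := by linarith
  have hNpos : 0 < A * C * (1 + B) + B * (1 + A) := by positivity
  have hDpos : 0 < C * (1 + B) + (1 + A) := by positivity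
  -- derivatives of inner exponentials
  have hlinA : HasDerivAt (fun t : ℝ => β0 + βx * t + βw + βxw * t) (βx + βxw) x := by
    have := (((hasDerivAt_const x β0).add ((hasDerivAt_id x).const_mul βx)).add
      (hasDerivAt_const x βw)).add ((hasDerivAt_id x).const_mul βxw)
    exact this.congr_deriv (by ring)
  have hlinB : HasDerivAt (fun t : ℝ => β0 + βx * t) βx x := by
    have := (hasDerivAt_const x β0).add ((hasDerivAt_id x).const_mul βx)
    exact this.congr_deriv (by ring)
  have hlinC : HasDerivAt (fun t : ℝ => γ0 + γx * t) γx x := by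
    have := (hasDerivAt_const x γ0).add ((hasDerivAt_id x).const_mul γx)
    exact this.congr_deriv (by ring)
  have hexpA : HasDerivAt (fun t : ℝ => Real.exp (β0 + βx * t + βw + βxw * t))
      (A * (βx + βxw)) x := by simpa [hA] using hlinA.exp
  have hexpB : HasDerivAt (fun t : ℝ => Real.exp (β0 + βx * t)) (B * βx) x := by
    simpa [hB] using hlinB.exp
  have hexpC : HasDerivAt (fun t : ℝ => Real.exp (γ0 + γx * t)) (C * γx) x := by
    simpa [hC] using hlinC.exp
  have hN : HasDerivAt (fun t : ℝ => Real.exp (β0 + βx * t + βw + βxw * t) *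
        Real.exp (γ0 + γx * t) * (1 + Real.exp (β0 + βx * t)) +
        Real.exp (β0 + βx * t) * (1 + Real.exp (β0 + βx * t + βw + βxw * t)))
      ((A * (βx + βxw) * C + A * (C * γx)) * (1 + B) + A * C * (B * βx) +
        (B * βx * (1 + A) + B * (A * (βx + βxw)))) x :=
    ((hexpA.mul hexpC).mul (hexpB.const_add 1)).add (hexpB.mul (hexpA.const_add 1))
  have hD : HasDerivAt (fun t : ℝ => Real.exp (γ0 + γx * t) * (1 + Real.exp (β0 + βx * t)) +
        (1 + Real.exp (β0 + βx * t + βw + βxw * t)))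
      (C * γx * (1 + B) + C * (B * βx) + A * (βx + βxw)) x :=
    (hexpC.mul (hexpB.const_add 1)).add (hexpA.const_add 1)
  have hder : betaMarg β0 βx βw βxw γ0 γx x =
      ((A * (βx + βxw) * C + A * (C * γx)) * (1 + B) + A * C * (B * βx) +
        (B * βx * (1 + A) + B * (A * (βx + βxw)))) / (A * C * (1 + B) + B * (1 + A)) -
      (C * γx * (1 + B) + C * (B * βx) + A * (βx + βxw)) / (C * (1 + B) + (1 + A)) := by
    rw [betaMarg, hfun]
    have h := ((hN.log hNpos.ne').sub (hD.log hDpos.ne')).deriv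
    simpa [hA, hB, hC, Pi.sub_def] using h
  -- closed forms for the probabilities on the RHS
  have hpyA : pY β0 βx βw βxw x 1 = A / (1 + A) := by
    simp only [pY, expit, hA]; ring_nf
  have hpyB : pY β0 βx βw βxw x 0 = B / (1 + B) := by
    simp only [pY, expit, hB]; ring_nf
  have hpw : pW γ0 γx x = C / (1 + C) := by simp only [pW, expit, hC]
  have hden : (0:ℝ) < (1 + A) * (1 + B) * (1 + C) := by positivity
  have hTT : pWgYX β0 βx βw βxw γ0 γx x true true =
      A * C * (1 + B) / (A * C * (1 + B) + B * (1 + A)) := by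
    have hd : jnt β0 βx βw βxw γ0 γx x true true + jnt β0 βx βw βxw γ0 γx x true false
        = pYgX β0 βx βw βxw γ0 γx x true := rfl
    rw [pWgYX, hd, pYgX_true_eq]
    simp only [jnt, Bool.false_eq_true, if_false, if_true, hpyA, hpw, ← hA, ← hB, ← hC]
    rw [div_div_eq_mul_div, div_eq_div_iff (by positivity) (by positivity)]
    field_simp
  have hFT : pWgYX β0 βx βw βxw γ0 γx x false true =
      C * (1 + B) / (C * (1 + B) + (1 + A)) := by
    have hd : jnt β0 βx βw βxw γ0 γx x false true + jnt β0 βx βw βxw γ0 γx x false false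
        = pYgX β0 βx βw βxw γ0 γx x false := rfl
    rw [pWgYX, hd, pYgX_false_eq]
    simp only [jnt, Bool.false_eq_true, if_false, if_true, hpyA, hpw, ← hA, ← hB, ← hC]
    rw [div_div_eq_mul_div, div_eq_div_iff (by positivity) (by positivity)]
    field_simp
    ring
  rw [hder, hpyA, hpyB, hTT, hFT]
  field_simp
  ring
end

section
/- For binary X, Y, W with logistic models logit P(Y=1|X=x,W=w) = β0 + βx·x + βw·w + βxw·x·w and logit P(W=1|X=x) = γ0 + γx·x, the marginal log cross-product ratio satisfies log cpr(Y,X) = βx + βxw + log RR_{W|Y,X=0} − log RR_{W|Y,X=1}, where cpr(Y,X) = [P(Y=1|X=1)P(Y=0|X=0)]/[P(Y=0|X=1)P(Y=1|X=0)] and RR_{W|Y,X=x} = P(W=1|Y=1,X=x)/P(W=1|Y=0,X=x). -/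
lemma expit_pos (t : ℝ) : 0 < expit t := by
  unfold expit; positivity

lemma expit_lt_one (t : ℝ) : expit t < 1 := by
  unfold expit
  rw [div_lt_one (by positivity)]
  linarith [Real.exp_pos t]

lemma expit_odds (t : ℝ) : expit t / (1 - expit t) = Real.exp t := by
  have h : (1 : ℝ) + Real.exp t ≠ 0 := by positivity
  unfold expit
  field_simp
  ring

lemma one_sub_expit_pos (t : ℝ) : 0 < 1 - expit t := by
  have := expit_lt_one t; linarith

lemma jnt_pos (β0 βx βw βxw γ0 γx x : ℝ) (y w : Bool) :
    0 < jnt β0 βx βw βxw γ0 γx x y w := by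
  cases y <;> cases w <;> norm_num [jnt] <;>
    (apply mul_pos <;> simp only [pY, pW] <;>
      first
        | exact expit_pos _
        | exact one_sub_expit_pos _)

lemma pYgX_pos (β0 βx βw βxw γ0 γx x : ℝ) (y : Bool) :
    0 < pYgX β0 βx βw βxw γ0 γx x y := by
  unfold pYgX
  have := jnt_pos β0 βx βw βxw γ0 γx x y true
  have := jnt_pos β0 βx βw βxw γ0 γx x y false
  linarith

lemma key_ratio (β0 βx βw βxw γ0 γx x : ℝ) :
    Real.log (pWgYX β0 βx βw βxw γ0 γx x true true / pWgYX β0 βx βw βxw γ0 γx x false true)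
      = (β0 + βx * x + βw + βxw * x)
        + Real.log (pYgX β0 βx βw βxw γ0 γx x false)
        - Real.log (pYgX β0 βx βw βxw γ0 γx x true) := by
  have hS1 := pYgX_pos β0 βx βw βxw γ0 γx x true
  have hS0 := pYgX_pos β0 βx βw βxw γ0 γx x false
  have hJ1 := jnt_pos β0 βx βw βxw γ0 γx x true true
  have hJ0 := jnt_pos β0 βx βw βxw γ0 γx x false true
  have hiff : pWgYX β0 βx βw βxw γ0 γx x true true / pWgYX β0 βx βw βxw γ0 γx x false true
      = Real.exp (β0 + βx * x + βw + βxw * x) * (pYgX β0 βx βw βxw γ0 γx x false / pYgX β0 βx βw βxw γ0 γx x true) := by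
    have hJratio : jnt β0 βx βw βxw γ0 γx x true true / jnt β0 βx βw βxw γ0 γx x false true
        = Real.exp (β0 + βx * x + βw + βxw * x) := by
      unfold jnt pY pW
      simp only [if_true, if_false]
      have hw : 0 < expit (γ0 + γx * x) := expit_pos _
      rw [mul_div_mul_right _ _ (ne_of_gt hw)]
      have := expit_odds (β0 + βx * x + βw * 1 + βxw * x * 1)
      rw [show β0 + βx * x + βw + βxw * x = β0 + βx * x + βw * 1 + βxw * x * 1 by ring]
      exact this
    unfold pWgYX
    rw [show (jnt β0 βx βw βxw γ0 γx x true true + jnt β0 βx βw βxw γ0 γx x true false) = pYgX β0 βx βw βxw γ0 γx x true from rfl,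
        show (jnt β0 βx βw βxw γ0 γx x false true + jnt β0 βx βw βxw γ0 γx x false false) = pYgX β0 βx βw βxw γ0 γx x false from rfl]
    rw [div_div_div_comm, hJratio, div_div_eq_mul_div, mul_div_assoc]
  rw [hiff, Real.log_mul (Real.exp_ne_zero _) (by positivity), Real.log_exp,
      Real.log_div (ne_of_gt hS0) (ne_of_gt hS1)]
  ring

/-- For binary `X`: `log cpr(Y,X) = βx + βxw + log RR_{W|Y,X=0} − log RR_{W|Y,X=1}`,
where `RR_{W|Y,X=x} = P(W=1|Y=1,X=x)/P(W=1|Y=0,X=x)` (Equation (6) of the paper). -/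
theorem log_cpr_decomposition (β0 βx βw βxw γ0 γx : ℝ) :
    Real.log ((pYgX β0 βx βw βxw γ0 γx 1 true * pYgX β0 βx βw βxw γ0 γx 0 false) /
              (pYgX β0 βx βw βxw γ0 γx 1 false * pYgX β0 βx βw βxw γ0 γx 0 true))
      = βx + βxw
        + Real.log (pWgYX β0 βx βw βxw γ0 γx 0 true true / pWgYX β0 βx βw βxw γ0 γx 0 false true)
        - Real.log (pWgYX β0 βx βw βxw γ0 γx 1 true true / pWgYX β0 βx βw βxw γ0 γx 1 false true) := by
  have hT1 := pYgX_pos β0 βx βw βxw γ0 γx 1 true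
  have hF1 := pYgX_pos β0 βx βw βxw γ0 γx 1 false
  have hT0 := pYgX_pos β0 βx βw βxw γ0 γx 0 true
  have hF0 := pYgX_pos β0 βx βw βxw γ0 γx 0 false
  rw [key_ratio β0 βx βw βxw γ0 γx 0, key_ratio β0 βx βw βxw γ0 γx 1,
      Real.log_div (by positivity) (by positivity),
      Real.log_mul (ne_of_gt hT1) (ne_of_gt hF0),
      Real.log_mul (ne_of_gt hF1) (ne_of_gt hT0)]
  ring
end

section
/- For binary X, Y, W, the interaction parameter satisfies the identity βxw = log RR_{W|Y,X=1} − log RR_{W|Y,X=0} − log RR_{W̄|Y,X=1} + log RR_{W̄|Y,X=0}, where W̄ = 1 − W, RR_{W|Y,X=x} = P(W=1|Y=1,X=x)/P(W=1|Y=0,X=x) and RR_{W̄|Y,X=x} = P(W=0|Y=1,X=x)/P(W=0|Y=0,X=x). -/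
lemma log_expit_odds (t : ℝ) :
    Real.log (expit t) - Real.log (1 - expit t) = t := by
  have h1 : expit t ≠ 0 := (expit_pos t).ne'
  have h2 : (1:ℝ) - expit t ≠ 0 := by have := expit_lt_one t; linarith
  rw [← Real.log_div h1 h2]
  have : expit t / (1 - expit t) = Real.exp t := by
    have he : (0:ℝ) < 1 + Real.exp t := by positivity
    rw [expit]
    field_simp
    ring
  rw [this, Real.log_exp]

lemma div_div_aux (A B St Sf : ℝ) (hB : B ≠ 0) (hSt : St ≠ 0) (hSf : Sf ≠ 0) :
    (A/St)/(B/Sf) = (A/B)*(Sf/St) := by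
  field_simp

lemma log_combo (a1 a0 q : ℝ) (ha1 : 0 < a1) (ha1' : a1 < 1)
    (ha0 : 0 < a0) (ha0' : a0 < 1) (hq : 0 < q) (hq' : q < 1) :
    Real.log ((a1*q/(a1*q + a0*(1-q))) / ((1-a1)*q/((1-a1)*q + (1-a0)*(1-q))))
      - Real.log ((a0*(1-q)/(a1*q + a0*(1-q))) / ((1-a0)*(1-q)/((1-a1)*q + (1-a0)*(1-q))))
    = Real.log a1 - Real.log (1-a1) - (Real.log a0 - Real.log (1-a0)) := by
  have h1 : (0:ℝ) < 1 - a1 := by linarith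
  have h0 : (0:ℝ) < 1 - a0 := by linarith
  have hq1 : (0:ℝ) < 1 - q := by linarith
  have hSt : 0 < a1*q + a0*(1-q) := by positivity
  have hSf : 0 < (1-a1)*q + (1-a0)*(1-q) := by positivity
  rw [div_div_aux _ _ _ _ (by positivity) hSt.ne' hSf.ne',
      div_div_aux _ _ _ _ (by positivity) hSt.ne' hSf.ne',
      mul_div_mul_right _ _ hq.ne', mul_div_mul_right _ _ hq1.ne',
      Real.log_mul (by positivity) (by positivity),
      Real.log_mul (by positivity) (by positivity),
      Real.log_div ha1.ne' h1.ne', Real.log_div ha0.ne' h0.ne']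
  ring

lemma term_log_RR (β0 βx βw βxw γ0 γx x : ℝ) :
    Real.log (pWgYX β0 βx βw βxw γ0 γx x true true / pWgYX β0 βx βw βxw γ0 γx x false true)
      - Real.log (pWgYX β0 βx βw βxw γ0 γx x true false / pWgYX β0 βx βw βxw γ0 γx x false false)
    = βw + βxw * x := by
  simp only [pWgYX, jnt, pY, pW, if_true, if_false, Bool.false_eq_true, ite_true, ite_false]
  rw [log_combo _ _ _ (expit_pos _) (expit_lt_one _) (expit_pos _) (expit_lt_one _)
      (expit_pos _) (expit_lt_one _)]
  have h1 := log_expit_odds (β0 + βx * x + βw * 1 + βxw * x * 1)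
  have h0 := log_expit_odds (β0 + βx * x + βw * 0 + βxw * x * 0)
  linarith

/-- `βxw = log RR_{W|Y,X=1} − log RR_{W|Y,X=0} − log RR_{W̄|Y,X=1} + log RR_{W̄|Y,X=0}`,
where `RR_{W|Y,X=x} = P(W=1|Y=1,X=x)/P(W=1|Y=0,X=x)` and
`RR_{W̄|Y,X=x} = P(W=0|Y=1,X=x)/P(W=0|Y=0,X=x)`. -/
theorem interaction_as_log_RR (β0 βx βw βxw γ0 γx : ℝ) :
    βxw
      = Real.log (pWgYX β0 βx βw βxw γ0 γx 1 true true / pWgYX β0 βx βw βxw γ0 γx 1 false true)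
        - Real.log (pWgYX β0 βx βw βxw γ0 γx 0 true true / pWgYX β0 βx βw βxw γ0 γx 0 false true)
        - Real.log (pWgYX β0 βx βw βxw γ0 γx 1 true false / pWgYX β0 βx βw βxw γ0 γx 1 false false)
        + Real.log (pWgYX β0 βx βw βxw γ0 γx 0 true false / pWgYX β0 βx βw βxw γ0 γx 0 false false) := by
  have h1 := term_log_RR β0 βx βw βxw γ0 γx 1
  have h0 := term_log_RR β0 βx βw βxw γ0 γx 0
  linarith
end

section
/- Under the logistic models with an additional covariate vector C = (C1,...,Cp) entering both models with main effects and X-by-C interactions (coefficients βxc_j in the Y-model, γxc_j in the W-model), the conditional marginal effect β(x,c) := ∂/∂x log[P(Y=1|X=x,C=c)/P(Y=0|X=x,C=c)] equals βx{1 − Δy(x,c)Δw(x,c)} + βxw{P(W=1|Y=1,X=x,C=c) − Δw(x,c)P(Y=1|W=1,X=x,C=c)} + (γx + Σ_j γxc_j c_j)Δw(x,c) + {1 − Δy(x,c)Δw(x,c)}Σ_j βxc_j c_j. -/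
/-- `P(Y=1 | X=x, W=w, C=c)` under the logistic model with covariates and `X`-by-`C`
interactions. -/
noncomputable def pYc (p : ℕ) (β0 βx βw βxw : ℝ) (βc βxc c : Fin p → ℝ) (x w : ℝ) : ℝ :=
  expit (β0 + βx * x + βw * w + βxw * x * w + ∑ j, (βc j * c j + βxc j * c j * x))

/-- `P(W=1 | X=x, C=c)` under the logistic model with covariates and `X`-by-`C`
interactions. -/
noncomputable def pWc (p : ℕ) (γ0 γx : ℝ) (γc γxc c : Fin p → ℝ) (x : ℝ) : ℝ :=
  expit (γ0 + γx * x + ∑ j, (γc j * c j + γxc j * c j * x))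

/-- joint conditional probability `P(Y=y, W=w | X=x, C=c)`. -/
noncomputable def jntc (p : ℕ) (β0 βx βw βxw : ℝ) (βc βxc : Fin p → ℝ) (γ0 γx : ℝ)
    (γc γxc c : Fin p → ℝ) (x : ℝ) (y w : Bool) : ℝ :=
  (if y then pYc p β0 βx βw βxw βc βxc c x (if w then 1 else 0)
   else 1 - pYc p β0 βx βw βxw βc βxc c x (if w then 1 else 0)) *
  (if w then pWc p γ0 γx γc γxc c x else 1 - pWc p γ0 γx γc γxc c x)

/-- `P(W=w | Y=y, X=x, C=c)` via Bayes' theorem. -/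
noncomputable def pWgYXc (p : ℕ) (β0 βx βw βxw : ℝ) (βc βxc : Fin p → ℝ) (γ0 γx : ℝ)
    (γc γxc c : Fin p → ℝ) (x : ℝ) (y w : Bool) : ℝ :=
  jntc p β0 βx βw βxw βc βxc γ0 γx γc γxc c x y w /
    (jntc p β0 βx βw βxw βc βxc γ0 γx γc γxc c x y true +
      jntc p β0 βx βw βxw βc βxc γ0 γx γc γxc c x y false)

/-- marginal (over `W`) log odds of `Y` given `X=x, C=c`. -/
noncomputable def margLogitc (p : ℕ) (β0 βx βw βxw : ℝ) (βc βxc : Fin p → ℝ) (γ0 γx : ℝ)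
    (γc γxc c : Fin p → ℝ) (x : ℝ) : ℝ :=
  Real.log ((jntc p β0 βx βw βxw βc βxc γ0 γx γc γxc c x true true +
      jntc p β0 βx βw βxw βc βxc γ0 γx γc γxc c x true false) /
    (jntc p β0 βx βw βxw βc βxc γ0 γx γc γxc c x false true +
      jntc p β0 βx βw βxw βc βxc γ0 γx γc γxc c x false false))


lemma hasDerivAt_expit (t : ℝ) : HasDerivAt expit (expit t * (1 - expit t)) t := by
  have h1 : (1 : ℝ) + Real.exp t ≠ 0 := by positivity
  have h := (Real.hasDerivAt_exp t).div ((hasDerivAt_const t (1:ℝ)).add (Real.hasDerivAt_exp t)) h1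
  refine HasDerivAt.congr_deriv h ?_
  simp only [Pi.add_apply]
  unfold expit
  field_simp
  ring

lemma hasDerivAt_expit_affine (A a x : ℝ) :
    HasDerivAt (fun x => expit (A + a * x)) (a * (expit (A + a*x) * (1 - expit (A + a*x)))) x := by
  have hin : HasDerivAt (fun x : ℝ => A + a * x) a x := by
    exact ((hasDerivAt_const x A).add ((hasDerivAt_id x).const_mul a)).congr_deriv (by ring)
  have := (hasDerivAt_expit (A + a * x)).comp x hin
  exact this.congr_deriv (by ring)

lemma core (A a B b C d x : ℝ) :
    deriv (fun x => Real.log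
      ((expit (A + a*x) * expit (C + d*x) + expit (B + b*x) * (1 - expit (C + d*x))) /
       ((1 - expit (A + a*x)) * expit (C + d*x) + (1 - expit (B + b*x)) * (1 - expit (C + d*x))))) x
    = (a * (expit (A + a*x) * (1 - expit (A + a*x)) * expit (C + d*x))
       + b * (expit (B + b*x) * (1 - expit (B + b*x)) * (1 - expit (C + d*x)))
       + d * (expit (C + d*x) * (1 - expit (C + d*x)) * (expit (A + a*x) - expit (B + b*x)))) /
      ((expit (A + a*x) * expit (C + d*x) + expit (B + b*x) * (1 - expit (C + d*x))) *
       ((1 - expit (A + a*x)) * expit (C + d*x) + (1 - expit (B + b*x)) * (1 - expit (C + d*x)))) := by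
  have hNpos : ∀ t : ℝ, 0 < expit (A + a*t) * expit (C + d*t) + expit (B + b*t) * (1 - expit (C + d*t)) := by
    intro t
    have h1 := expit_pos (A + a*t); have h2 := expit_pos (B + b*t); have h3 := expit_pos (C + d*t)
    have h4 := expit_lt_one (C + d*t)
    have : (0:ℝ) < 1 - expit (C + d*t) := by linarith
    exact add_pos (mul_pos h1 h3) (mul_pos h2 this)
  have hDpos : ∀ t : ℝ, 0 < (1 - expit (A + a*t)) * expit (C + d*t) + (1 - expit (B + b*t)) * (1 - expit (C + d*t)) := by
    intro t
    have h1 := expit_lt_one (A + a*t); have h2 := expit_lt_one (B + b*t)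
    have h3 := expit_pos (C + d*t); have h4 := expit_lt_one (C + d*t)
    have h5 : (0:ℝ) < 1 - expit (A + a*t) := by linarith
    have h6 : (0:ℝ) < 1 - expit (B + b*t) := by linarith
    have h7 : (0:ℝ) < 1 - expit (C + d*t) := by linarith
    exact add_pos (mul_pos h5 h3) (mul_pos h6 h7)
  have hfun : (fun x => Real.log
      ((expit (A + a*x) * expit (C + d*x) + expit (B + b*x) * (1 - expit (C + d*x))) /
       ((1 - expit (A + a*x)) * expit (C + d*x) + (1 - expit (B + b*x)) * (1 - expit (C + d*x)))))
      = fun x => Real.log (expit (A + a*x) * expit (C + d*x) + expit (B + b*x) * (1 - expit (C + d*x)))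
        - Real.log ((1 - expit (A + a*x)) * expit (C + d*x) + (1 - expit (B + b*x)) * (1 - expit (C + d*x))) := by
    funext t
    exact Real.log_div (hNpos t).ne' (hDpos t).ne'
  rw [hfun]
  have hp1 := hasDerivAt_expit_affine A a x
  have hp0 := hasDerivAt_expit_affine B b x
  have hq := hasDerivAt_expit_affine C d x
  have hq' : HasDerivAt (fun t => 1 - expit (C + d*t))
      (-(d * (expit (C + d*x) * (1 - expit (C + d*x))))) x := by
    exact ((hasDerivAt_const x (1:ℝ)).sub hq).congr_deriv (by ring)
  have hp1' : HasDerivAt (fun t => 1 - expit (A + a*t))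
      (-(a * (expit (A + a*x) * (1 - expit (A + a*x))))) x := by
    exact ((hasDerivAt_const x (1:ℝ)).sub hp1).congr_deriv (by ring)
  have hp0' : HasDerivAt (fun t => 1 - expit (B + b*t))
      (-(b * (expit (B + b*x) * (1 - expit (B + b*x))))) x := by
    exact ((hasDerivAt_const x (1:ℝ)).sub hp0).congr_deriv (by ring)
  have hN := (hp1.mul hq).add (hp0.mul hq')
  have hD := (hp1'.mul hq).add (hp0'.mul hq')
  have hL := (hN.log (hNpos x).ne').sub (hD.log (hDpos x).ne')
  have hL' : HasDerivAt (fun x => Real.log (expit (A + a*x) * expit (C + d*x) + expit (B + b*x) * (1 - expit (C + d*x)))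
          - Real.log ((1 - expit (A + a*x)) * expit (C + d*x) + (1 - expit (B + b*x)) * (1 - expit (C + d*x)))) _ x := hL
  rw [hL'.deriv]
  simp only [Pi.add_apply, Pi.mul_apply]
  have hNne := (hNpos x).ne'
  have hDne := (hDpos x).ne'
  rw [div_sub_div _ _ hNne hDne, div_eq_div_iff (mul_ne_zero hNne hDne) (mul_ne_zero hNne hDne)]
  ring

/-- Decomposition of the conditional marginal effect `β(x,c)` in the presence of covariates
with `X`-by-`C` interactions (Equation (5) of the paper). -/
theorem marginal_effect_decomposition_covariates
    (p : ℕ) (β0 βx βw βxw : ℝ) (βc βxc : Fin p → ℝ) (γ0 γx : ℝ)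
    (γc γxc c : Fin p → ℝ) (x : ℝ) :
    deriv (margLogitc p β0 βx βw βxw βc βxc γ0 γx γc γxc c) x
      = βx * (1 - (pYc p β0 βx βw βxw βc βxc c x 1 - pYc p β0 βx βw βxw βc βxc c x 0) *
                  (pWgYXc p β0 βx βw βxw βc βxc γ0 γx γc γxc c x true true -
                   pWgYXc p β0 βx βw βxw βc βxc γ0 γx γc γxc c x false true))
        + βxw * (pWgYXc p β0 βx βw βxw βc βxc γ0 γx γc γxc c x true true -
                  (pWgYXc p β0 βx βw βxw βc βxc γ0 γx γc γxc c x true true -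
                   pWgYXc p β0 βx βw βxw βc βxc γ0 γx γc γxc c x false true) *
                    pYc p β0 βx βw βxw βc βxc c x 1)
        + (γx + ∑ j, γxc j * c j) *
            (pWgYXc p β0 βx βw βxw βc βxc γ0 γx γc γxc c x true true -
             pWgYXc p β0 βx βw βxw βc βxc γ0 γx γc γxc c x false true)
        + (1 - (pYc p β0 βx βw βxw βc βxc c x 1 - pYc p β0 βx βw βxw βc βxc c x 0) *
                (pWgYXc p β0 βx βw βxw βc βxc γ0 γx γc γxc c x true true -
                 pWgYXc p β0 βx βw βxw βc βxc γ0 γx γc γxc c x false true)) *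
            ∑ j, βxc j * c j := by
  set B := ∑ j, βc j * c j with hB
  set Bx := ∑ j, βxc j * c j with hBx
  set G := ∑ j, γc j * c j with hG
  set Gx := ∑ j, γxc j * c j with hGx
  have hsum : ∀ t : ℝ, (∑ j, (βc j * c j + βxc j * c j * t)) = B + Bx * t := by
    intro t
    rw [Finset.sum_add_distrib, ← Finset.sum_mul]
  have hsumg : ∀ t : ℝ, (∑ j, (γc j * c j + γxc j * c j * t)) = G + Gx * t := by
    intro t
    rw [Finset.sum_add_distrib, ← Finset.sum_mul]
  have e1 : ∀ t : ℝ, pYc p β0 βx βw βxw βc βxc c t 1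
      = expit ((β0 + βw + B) + (βx + βxw + Bx) * t) := by
    intro t; rw [pYc, hsum t]; congr 1; ring
  have e0 : ∀ t : ℝ, pYc p β0 βx βw βxw βc βxc c t 0
      = expit ((β0 + B) + (βx + Bx) * t) := by
    intro t; rw [pYc, hsum t]; congr 1; ring
  have eW : ∀ t : ℝ, pWc p γ0 γx γc γxc c t
      = expit ((γ0 + G) + (γx + Gx) * t) := by
    intro t; rw [pWc, hsumg t]; congr 1; ring
  have hml : margLogitc p β0 βx βw βxw βc βxc γ0 γx γc γxc c
      = fun t => Real.log
        ((expit ((β0+βw+B) + (βx+βxw+Bx)*t) * expit ((γ0+G)+(γx+Gx)*t)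
          + expit ((β0+B)+(βx+Bx)*t) * (1 - expit ((γ0+G)+(γx+Gx)*t))) /
         ((1 - expit ((β0+βw+B) + (βx+βxw+Bx)*t)) * expit ((γ0+G)+(γx+Gx)*t)
          + (1 - expit ((β0+B)+(βx+Bx)*t)) * (1 - expit ((γ0+G)+(γx+Gx)*t)))) := by
    funext t
    simp only [margLogitc, jntc, ite_true, ite_false, Bool.false_eq_true, e1 t, e0 t, eW t]
  rw [hml, core (β0+βw+B) (βx+βxw+Bx) (β0+B) (βx+Bx) (γ0+G) (γx+Gx) x]
  have j11 : jntc p β0 βx βw βxw βc βxc γ0 γx γc γxc c x true true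
      = expit ((β0+βw+B) + (βx+βxw+Bx)*x) * expit ((γ0+G)+(γx+Gx)*x) := by
    simp only [jntc, ite_true, e1 x, eW x]
  have j10 : jntc p β0 βx βw βxw βc βxc γ0 γx γc γxc c x true false
      = expit ((β0+B)+(βx+Bx)*x) * (1 - expit ((γ0+G)+(γx+Gx)*x)) := by
    simp only [jntc, ite_true, ite_false, Bool.false_eq_true, e0 x, eW x]
  have j01 : jntc p β0 βx βw βxw βc βxc γ0 γx γc γxc c x false true
      = (1 - expit ((β0+βw+B) + (βx+βxw+Bx)*x)) * expit ((γ0+G)+(γx+Gx)*x) := by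
    simp only [jntc, ite_true, ite_false, Bool.false_eq_true, e1 x, eW x]
  have j00 : jntc p β0 βx βw βxw βc βxc γ0 γx γc γxc c x false false
      = (1 - expit ((β0+B)+(βx+Bx)*x)) * (1 - expit ((γ0+G)+(γx+Gx)*x)) := by
    simp only [jntc, ite_false, Bool.false_eq_true, e0 x, eW x]
  simp only [pWgYXc, j11, j10, j01, j00, e1 x, e0 x]
  set P1 := expit ((β0+βw+B) + (βx+βxw+Bx)*x) with hP1
  set P0 := expit ((β0+B)+(βx+Bx)*x) with hP0
  set Q := expit ((γ0+G)+(γx+Gx)*x) with hQ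
  have h1 : 0 < P1 := expit_pos _
  have h2 : P1 < 1 := expit_lt_one _
  have h3 : 0 < P0 := expit_pos _
  have h4 : P0 < 1 := expit_lt_one _
  have h5 : 0 < Q := expit_pos _
  have h6 : Q < 1 := expit_lt_one _
  have hN : P1 * Q + P0 * (1 - Q) ≠ 0 := by nlinarith
  have hD : (1 - P1) * Q + (1 - P0) * (1 - Q) ≠ 0 := by nlinarith
  field_simp
  ring
end

section
/- For binary X, Y and two binary mediators W1, W2 generated by hierarchical logistic models, after marginalizing over the inner mediator W1 the conditional distribution of Y given (X, W2) is again logistic with coefficients β*_x = βx + βxw1 + log RR_{W1|Y,X=0,W2=0} − log RR_{W1|Y,X=1,W2=0}, β*_{w2} = βw2 + βw1w2 + log RR_{W1|Y,W2=0,X=0} − log RR_{W1|Y,W2=1,X=0}, and β*_{xw2} = βxw2 + (log RR_{W1|Y,W2=0,X=1} − log RR_{W1|Y,W2=1,X=1}) − (log RR_{W1|Y,W2=0,X=0} − log RR_{W1|Y,W2=1,X=0}). -/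
/-- `P(Y=1 | X=x, W1=w1, W2=w2)` under the hierarchical logistic model. -/
noncomputable def pY2 (β0 βx βw1 βxw1 βw2 βxw2 βw1w2 x w1 w2 : ℝ) : ℝ :=
  expit (β0 + βx * x + βw1 * w1 + βxw1 * x * w1 + βw2 * w2 + βxw2 * x * w2 + βw1w2 * w1 * w2)

/-- `P(W1=1 | X=x, W2=w2)` under the hierarchical logistic model. -/
noncomputable def pW1 (γ10 γ1x γ1w2 γ1xw2 x w2 : ℝ) : ℝ :=
  expit (γ10 + γ1x * x + γ1w2 * w2 + γ1xw2 * x * w2)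

/-- `P(W2=1 | X=x)` under the hierarchical logistic model. -/
noncomputable def pW2 (γ20 γ2x x : ℝ) : ℝ := expit (γ20 + γ2x * x)

/-- joint conditional probability `P(Y=y, W1=w1 | X=x, W2=w2)`. -/
noncomputable def jYW1 (β0 βx βw1 βxw1 βw2 βxw2 βw1w2 γ10 γ1x γ1w2 γ1xw2 x w2 : ℝ)
    (y w1 : Bool) : ℝ :=
  (if y then pY2 β0 βx βw1 βxw1 βw2 βxw2 βw1w2 x (if w1 then 1 else 0) w2
   else 1 - pY2 β0 βx βw1 βxw1 βw2 βxw2 βw1w2 x (if w1 then 1 else 0) w2) *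
  (if w1 then pW1 γ10 γ1x γ1w2 γ1xw2 x w2 else 1 - pW1 γ10 γ1x γ1w2 γ1xw2 x w2)

/-- marginal (over `W1`) log odds of `Y` given `X=x, W2=w2`. -/
noncomputable def Lgt (β0 βx βw1 βxw1 βw2 βxw2 βw1w2 γ10 γ1x γ1w2 γ1xw2 x w2 : ℝ) : ℝ :=
  Real.log ((jYW1 β0 βx βw1 βxw1 βw2 βxw2 βw1w2 γ10 γ1x γ1w2 γ1xw2 x w2 true true +
      jYW1 β0 βx βw1 βxw1 βw2 βxw2 βw1w2 γ10 γ1x γ1w2 γ1xw2 x w2 true false) /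
    (jYW1 β0 βx βw1 βxw1 βw2 βxw2 βw1w2 γ10 γ1x γ1w2 γ1xw2 x w2 false true +
      jYW1 β0 βx βw1 βxw1 βw2 βxw2 βw1w2 γ10 γ1x γ1w2 γ1xw2 x w2 false false))

/-- `log RR_{W1∣Y, X=x, W2=w2} = log [P(W1=1|Y=1,X=x,W2=w2) / P(W1=1|Y=0,X=x,W2=w2)]`. -/
noncomputable def logRRW1 (β0 βx βw1 βxw1 βw2 βxw2 βw1w2 γ10 γ1x γ1w2 γ1xw2 x w2 : ℝ) : ℝ :=
  Real.log ((jYW1 β0 βx βw1 βxw1 βw2 βxw2 βw1w2 γ10 γ1x γ1w2 γ1xw2 x w2 true true /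
      (jYW1 β0 βx βw1 βxw1 βw2 βxw2 βw1w2 γ10 γ1x γ1w2 γ1xw2 x w2 true true +
        jYW1 β0 βx βw1 βxw1 βw2 βxw2 βw1w2 γ10 γ1x γ1w2 γ1xw2 x w2 true false)) /
    (jYW1 β0 βx βw1 βxw1 βw2 βxw2 βw1w2 γ10 γ1x γ1w2 γ1xw2 x w2 false true /
      (jYW1 β0 βx βw1 βxw1 βw2 βxw2 βw1w2 γ10 γ1x γ1w2 γ1xw2 x w2 false true +
        jYW1 β0 βx βw1 βxw1 βw2 βxw2 βw1w2 γ10 γ1x γ1w2 γ1xw2 x w2 false false)))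

lemma key (β0 βx βw1 βxw1 βw2 βxw2 βw1w2 γ10 γ1x γ1w2 γ1xw2 x w2 : ℝ) :
    Lgt β0 βx βw1 βxw1 βw2 βxw2 βw1w2 γ10 γ1x γ1w2 γ1xw2 x w2 +
      logRRW1 β0 βx βw1 βxw1 βw2 βxw2 βw1w2 γ10 γ1x γ1w2 γ1xw2 x w2
    = β0 + βx * x + βw1 + βxw1 * x + βw2 * w2 + βxw2 * x * w2 + βw1w2 * w2 := by
  have hp1 : 0 < pY2 β0 βx βw1 βxw1 βw2 βxw2 βw1w2 x 1 w2 := expit_pos _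
  have hp1' : pY2 β0 βx βw1 βxw1 βw2 βxw2 βw1w2 x 1 w2 < 1 := expit_lt_one _
  have hp0 : 0 < pY2 β0 βx βw1 βxw1 βw2 βxw2 βw1w2 x 0 w2 := expit_pos _
  have hp0' : pY2 β0 βx βw1 βxw1 βw2 βxw2 βw1w2 x 0 w2 < 1 := expit_lt_one _
  have hq : 0 < pW1 γ10 γ1x γ1w2 γ1xw2 x w2 := expit_pos _
  have hq' : pW1 γ10 γ1x γ1w2 γ1xw2 x w2 < 1 := expit_lt_one _
  set p1 := pY2 β0 βx βw1 βxw1 βw2 βxw2 βw1w2 x 1 w2 with hp1def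
  set p0 := pY2 β0 βx βw1 βxw1 βw2 βxw2 βw1w2 x 0 w2 with hp0def
  set q := pW1 γ10 γ1x γ1w2 γ1xw2 x w2 with hqdef
  have hA : 0 < p1 * q + p0 * (1 - q) := by
    have h1 : 0 < p1 * q := mul_pos hp1 hq
    have h2 : 0 < p0 * (1 - q) := mul_pos hp0 (by linarith)
    linarith
  have hB : 0 < (1 - p1) * q + (1 - p0) * (1 - q) := by
    have h1 : 0 < (1 - p1) * q := mul_pos (by linarith) hq
    have h2 : 0 < (1 - p0) * (1 - q) := mul_pos (by linarith) (by linarith)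
    linarith
  have hL2 : β0 + βx * x + βw1 * 1 + βxw1 * x * 1 + βw2 * w2 + βxw2 * x * w2
      + βw1w2 * 1 * w2 = Real.log p1 - Real.log (1 - p1) := by
    rw [← Real.log_div hp1.ne' (by linarith : (0:ℝ) < 1 - p1).ne', ← Real.log_exp (β0 + βx * x
      + βw1 * 1 + βxw1 * x * 1 + βw2 * w2 + βxw2 * x * w2 + βw1w2 * 1 * w2)]
    congr 1
    rw [hp1def]
    unfold pY2 expit
    have h := Real.exp_pos (β0 + βx * x + βw1 * 1 + βxw1 * x * 1 + βw2 * w2 + βxw2 * x * w2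
      + βw1w2 * 1 * w2)
    field_simp
    ring
  unfold Lgt logRRW1 jYW1
  simp only [Bool.false_eq_true, if_true, if_false, ite_true, ite_false]
  rw [← hp1def, ← hp0def, ← hqdef]
  have hx1 : p1 * q ≠ 0 := (mul_pos hp1 hq).ne'
  have hx0 : (1 - p1) * q ≠ 0 := (mul_pos (by linarith) hq).ne'
  rw [Real.log_div hA.ne' hB.ne',
    Real.log_div (div_ne_zero hx1 hA.ne') (div_ne_zero hx0 hB.ne'),
    Real.log_div hx1 hA.ne', Real.log_div hx0 hB.ne',
    Real.log_mul hp1.ne' hq.ne',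
    Real.log_mul (by linarith : (0:ℝ) < 1 - p1).ne' hq.ne']
  linarith [hL2]

/-- Marginalizing over the inner mediator `W1`: the conditional law of `Y` given `(X, W2)`
is saturated-logistic with coefficients `β*_x = Lgt(1,0) − Lgt(0,0)`,
`β*_{w2} = Lgt(0,1) − Lgt(0,0)` and `β*_{xw2} = (Lgt(1,1) − Lgt(0,1)) − (Lgt(1,0) − Lgt(0,0))`,
and these coefficients have the stated expressions in terms of log relative risks of `W1`. -/
theorem inner_marginalization
    (β0 βx βw1 βxw1 βw2 βxw2 βw1w2 γ10 γ1x γ1w2 γ1xw2 : ℝ) :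
    (Lgt β0 βx βw1 βxw1 βw2 βxw2 βw1w2 γ10 γ1x γ1w2 γ1xw2 1 0 -
        Lgt β0 βx βw1 βxw1 βw2 βxw2 βw1w2 γ10 γ1x γ1w2 γ1xw2 0 0
      = βx + βxw1
        + logRRW1 β0 βx βw1 βxw1 βw2 βxw2 βw1w2 γ10 γ1x γ1w2 γ1xw2 0 0
        - logRRW1 β0 βx βw1 βxw1 βw2 βxw2 βw1w2 γ10 γ1x γ1w2 γ1xw2 1 0) ∧
    (Lgt β0 βx βw1 βxw1 βw2 βxw2 βw1w2 γ10 γ1x γ1w2 γ1xw2 0 1 -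
        Lgt β0 βx βw1 βxw1 βw2 βxw2 βw1w2 γ10 γ1x γ1w2 γ1xw2 0 0
      = βw2 + βw1w2
        + logRRW1 β0 βx βw1 βxw1 βw2 βxw2 βw1w2 γ10 γ1x γ1w2 γ1xw2 0 0
        - logRRW1 β0 βx βw1 βxw1 βw2 βxw2 βw1w2 γ10 γ1x γ1w2 γ1xw2 0 1) ∧
    ((Lgt β0 βx βw1 βxw1 βw2 βxw2 βw1w2 γ10 γ1x γ1w2 γ1xw2 1 1 -
        Lgt β0 βx βw1 βxw1 βw2 βxw2 βw1w2 γ10 γ1x γ1w2 γ1xw2 0 1) -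
      (Lgt β0 βx βw1 βxw1 βw2 βxw2 βw1w2 γ10 γ1x γ1w2 γ1xw2 1 0 -
        Lgt β0 βx βw1 βxw1 βw2 βxw2 βw1w2 γ10 γ1x γ1w2 γ1xw2 0 0)
      = βxw2
        + (logRRW1 β0 βx βw1 βxw1 βw2 βxw2 βw1w2 γ10 γ1x γ1w2 γ1xw2 1 0
            - logRRW1 β0 βx βw1 βxw1 βw2 βxw2 βw1w2 γ10 γ1x γ1w2 γ1xw2 1 1)
        - (logRRW1 β0 βx βw1 βxw1 βw2 βxw2 βw1w2 γ10 γ1x γ1w2 γ1xw2 0 0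
            - logRRW1 β0 βx βw1 βxw1 βw2 βxw2 βw1w2 γ10 γ1x γ1w2 γ1xw2 0 1)) := by
  have h00 := key β0 βx βw1 βxw1 βw2 βxw2 βw1w2 γ10 γ1x γ1w2 γ1xw2 0 0
  have h10 := key β0 βx βw1 βxw1 βw2 βxw2 βw1w2 γ10 γ1x γ1w2 γ1xw2 1 0
  have h01 := key β0 βx βw1 βxw1 βw2 βxw2 βw1w2 γ10 γ1x γ1w2 γ1xw2 0 1
  have h11 := key β0 βx βw1 βxw1 βw2 βxw2 βw1w2 γ10 γ1x γ1w2 γ1xw2 1 1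
  refine ⟨by linarith, by linarith, by linarith⟩
end

section
/- For binary Y, W and real X with βxw = 0, the intercept of the marginal-over-W model satisfies: the marginal log odds of Y at X=x equals β0 + βx·x − log[(1+exp g_0(x))/(1+exp g_1(x))], where g_y(x) = log[P(W=1|Y=y,X=x)/P(W=0|Y=y,X=x)]; equivalently, for the binary-X saturated marginal model the intercept is β*_0 = β0 − log[(1+exp g_0(0))/(1+exp g_1(0))]. -/
lemma g_eq (β0 βx βw βxw γ0 γx x : ℝ) (y : Bool) :
    g β0 βx βw βxw γ0 γx y x
      = Real.log (jnt β0 βx βw βxw γ0 γx x y true)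
        - Real.log (jnt β0 βx βw βxw γ0 γx x y false) := by
  have hS : jnt β0 βx βw βxw γ0 γx x y true + jnt β0 βx βw βxw γ0 γx x y false ≠ 0 :=
    ne_of_gt (pYgX_pos β0 βx βw βxw γ0 γx x y)
  have hT := jnt_pos β0 βx βw βxw γ0 γx x y true
  have hF := jnt_pos β0 βx βw βxw γ0 γx x y false
  unfold g pWgYX
  have hr : jnt β0 βx βw βxw γ0 γx x y true / (jnt β0 βx βw βxw γ0 γx x y true + jnt β0 βx βw βxw γ0 γx x y false)
      / (jnt β0 βx βw βxw γ0 γx x y false / (jnt β0 βx βw βxw γ0 γx x y true + jnt β0 βx βw βxw γ0 γx x y false))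
      = jnt β0 βx βw βxw γ0 γx x y true / jnt β0 βx βw βxw γ0 γx x y false := by
    field_simp
  rw [hr, Real.log_div (ne_of_gt hT) (ne_of_gt hF)]

lemma one_add_exp_g (β0 βx βw βxw γ0 γx x : ℝ) (y : Bool) :
    1 + Real.exp (g β0 βx βw βxw γ0 γx y x)
      = pYgX β0 βx βw βxw γ0 γx x y / jnt β0 βx βw βxw γ0 γx x y false := by
  have hT := jnt_pos β0 βx βw βxw γ0 γx x y true
  have hF := jnt_pos β0 βx βw βxw γ0 γx x y false
  rw [g_eq, Real.exp_sub, Real.exp_log hT, Real.exp_log hF]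
  unfold pYgX
  field_simp
  ring

/-- With `βxw = 0`, the marginal log odds of `Y` at `X = x` equals
`β0 + βx·x − log[(1+exp g_0(x))/(1+exp g_1(x))]`; in particular, for the binary-`X`
saturated marginal model the intercept is `β*_0 = β0 − log[(1+exp g_0(0))/(1+exp g_1(0))]`. -/
theorem marginal_intercept (β0 βx βw βxw γ0 γx : ℝ) (hxw : βxw = 0) :
    (∀ x : ℝ, margLogit β0 βx βw βxw γ0 γx x
      = β0 + βx * x
        - Real.log ((1 + Real.exp (g β0 βx βw βxw γ0 γx false x)) /
                    (1 + Real.exp (g β0 βx βw βxw γ0 γx true x)))) ∧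
    margLogit β0 βx βw βxw γ0 γx 0
      = β0 - Real.log ((1 + Real.exp (g β0 βx βw βxw γ0 γx false 0)) /
                       (1 + Real.exp (g β0 βx βw βxw γ0 γx true 0))) := by
  have H : ∀ x : ℝ, margLogit β0 βx βw βxw γ0 γx x
      = β0 + βx * x
        - Real.log ((1 + Real.exp (g β0 βx βw βxw γ0 γx false x)) /
                    (1 + Real.exp (g β0 βx βw βxw γ0 γx true x))) := by
    intro x
    have hT := jnt_pos β0 βx βw βxw γ0 γx x true false
    have hF := jnt_pos β0 βx βw βxw γ0 γx x false false
    have hYT := pYgX_pos β0 βx βw βxw γ0 γx x true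
    have hYF := pYgX_pos β0 βx βw βxw γ0 γx x false
    have key : Real.log (jnt β0 βx βw βxw γ0 γx x true false)
        - Real.log (jnt β0 βx βw βxw γ0 γx x false false) = β0 + βx * x := by
      have heq : jnt β0 βx βw βxw γ0 γx x true false / jnt β0 βx βw βxw γ0 γx x false false
          = Real.exp (β0 + βx * x) := by
        unfold jnt pY pW expit
        have h1 : (0:ℝ) < 1 + Real.exp (β0 + βx * x) := by positivity
        have h2 : (0:ℝ) < 1 + Real.exp (γ0 + γx * x) := by positivity
        simp only [if_false, if_true, Bool.false_eq_true, mul_zero, add_zero]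
        field_simp
        ring
      rw [← Real.log_div (ne_of_gt hT) (ne_of_gt hF), heq, Real.log_exp]
    have h0 : 0 < 1 + Real.exp (g β0 βx βw βxw γ0 γx false x) := by positivity
    have h1 : 0 < 1 + Real.exp (g β0 βx βw βxw γ0 γx true x) := by positivity
    rw [margLogit, Real.log_div (ne_of_gt hYT) (ne_of_gt hYF),
      Real.log_div (ne_of_gt h0) (ne_of_gt h1), one_add_exp_g, one_add_exp_g,
      Real.log_div (ne_of_gt hYF) (ne_of_gt hF), Real.log_div (ne_of_gt hYT) (ne_of_gt hT)]
    linarith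
  refine ⟨H, ?_⟩
  have := H 0
  simpa using this
end
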